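/- Let O_F be a discrete valuation ring, K a quadratic étale F-algebra, V a free rank-one K-module, and 𝒱 the Bruhat–Tits tree vertex set. Then for each k ∈ ℕ the fibers 𝒱(k) = {v : n(v) = k} are precisely the orbits of the action of K^× on 𝒱 (acting via K^× ⊆ GL_F(V)); i.e., K^× acts transitively on each 𝒱(k), and distinct k give distinct orbits. -/

import Mathlib

open Module Submodule

set_option linter.unusedSectionVars false
set_option maxHeartbeats 1600000

/-- The multiplier order `O(Λ) = {a ∈ K : aΛ ⊆ Λ}` of a lattice `Λ`. -/
def multiplierOrder (K : Type*) {O_F V : Type*} [CommRing O_F] [CommRing K]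
    [Algebra O_F K] [AddCommGroup V] [Module K V] [Module O_F V]
    [IsScalarTower O_F K V] (Λ : Submodule O_F V) : Subalgebra O_F K where
  carrier := {a : K | ∀ x ∈ Λ, a • x ∈ Λ}
  add_mem' := fun {a b} ha hb x hx => by
    rw [add_smul]; exact Λ.add_mem (ha x hx) (hb x hx)
  mul_mem' := fun {a b} ha hb x hx => by
    rw [mul_smul]; exact ha _ (hb x hx)
  one_mem' := fun x hx => by rw [one_smul]; exact hx
  zero_mem' := fun x hx => by rw [zero_smul]; exact Λ.zero_mem
  algebraMap_mem' := fun r x hx => by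
    rw [algebraMap_smul]; exact Λ.smul_mem r hx

/-- The submodule `O_F + p_F^n · O_K` of `K`: the order of conductor `p_F^n`. -/
def conductorOrderSubmodule (O_F K : Type*) [CommRing O_F] [IsLocalRing O_F]
    [CommRing K] [Algebra O_F K] (n : ℕ) : Submodule O_F K :=
  (1 : Submodule O_F K) ⊔
    ((IsLocalRing.maximalIdeal O_F) ^ n) • (Subalgebra.toSubmodule (integralClosure O_F K))

lemma mem_multiplierOrder_iff {O_F K V : Type*} [CommRing O_F] [CommRing K]
    [Algebra O_F K] [AddCommGroup V] [Module K V] [Module O_F V]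
    [IsScalarTower O_F K V] (Λ : Submodule O_F V) (a : K) :
    a ∈ multiplierOrder K Λ ↔ ∀ x ∈ Λ, a • x ∈ Λ := Iff.rfl

lemma aux_fg_of_le {R M : Type*} [CommRing R] [IsNoetherianRing R]
    [AddCommGroup M] [Module R M]
    {N P : Submodule R M} (h : N ≤ P) (hP : P.FG) : N.FG := by
  haveI := isNoetherian_of_fg_of_noetherian P hP
  have he : Submodule.map P.subtype (Submodule.comap P.subtype N) = N := by
    rw [Submodule.map_comap_subtype]
    exact inf_eq_right.mpr h
  rw [← he]
  exact Submodule.FG.map _ (IsNoetherian.noetherian _)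

section Aux
variable {O_F F K : Type*} [CommRing O_F] [IsDomain O_F] [IsDiscreteValuationRing O_F]
  [Field F] [Algebra O_F F] [IsFractionRing O_F F]
  [CommRing K] [Algebra F K] [Algebra O_F K] [IsScalarTower O_F F K]

lemma aux_common_denom (s : Finset F) :
    ∃ d : O_F, d ≠ 0 ∧ ∀ f ∈ s, ∃ a : O_F, algebraMap O_F F a = algebraMap O_F F d * f := by
  obtain ⟨b, hb⟩ := IsLocalization.exist_integer_multiples_of_finset (nonZeroDivisors O_F) s
  refine ⟨b, nonZeroDivisors.coe_ne_zero b, fun f hf => ?_⟩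
  obtain ⟨a, ha⟩ := hb f hf
  exact ⟨a, by rw [ha]; exact Algebra.smul_def _ _⟩


lemma aux_frac_principal (S : Submodule O_F F) (d : F) (hd : d ≠ 0)
    (hb : ∀ s ∈ S, ∃ a : O_F, algebraMap O_F F a = d * s) :
    ∃ c : F, S = Submodule.span O_F {c} := by
  set A : Ideal O_F :=
    Submodule.comap (Algebra.linearMap O_F F)
      (Submodule.map (LinearMap.mulLeft O_F d) S) with hA
  obtain ⟨g, hg⟩ := (IsPrincipalIdealRing.principal A)
  refine ⟨d⁻¹ * algebraMap O_F F g, le_antisymm ?_ ?_⟩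
  · intro s hs
    obtain ⟨a, ha⟩ := hb s hs
    have haA : a ∈ A := by
      simp only [hA, Submodule.mem_comap, Algebra.linearMap_apply, Submodule.mem_map]
      exact ⟨s, hs, by rw [LinearMap.mulLeft_apply, ha]⟩
    rw [hg] at haA
    obtain ⟨t, ht⟩ := Ideal.mem_span_singleton'.mp haA
    rw [Submodule.mem_span_singleton]
    refine ⟨t, ?_⟩
    have : algebraMap O_F F a = algebraMap O_F F t * algebraMap O_F F g := by
      rw [← map_mul, ht]
    rw [Algebra.smul_def]
    field_simp
    rw [← this, ha]
  · rw [Submodule.span_le, Set.singleton_subset_iff]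
    have hgA : g ∈ A := hg ▸ Ideal.mem_span_singleton_self g
    simp only [hA, Submodule.mem_comap, Algebra.linearMap_apply, Submodule.mem_map] at hgA
    obtain ⟨s₀, hs₀, hds₀⟩ := hgA
    rw [LinearMap.mulLeft_apply] at hds₀
    have : d⁻¹ * algebraMap O_F F g = s₀ := by rw [← hds₀]; field_simp
    rw [SetLike.mem_coe, this]; exact hs₀


lemma aux_exists_scalar_mem (M : Submodule O_F K)
    (hfull : Submodule.span F (M : Set K) = ⊤) :
    ∃ d : O_F, d ≠ 0 ∧ algebraMap O_F K d ∈ M := by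
  classical
  have h1 : (1 : K) ∈ Submodule.span F (M : Set K) := hfull ▸ Submodule.mem_top
  obtain ⟨n, f, g, hfg⟩ := Submodule.mem_span_set'.mp h1
  obtain ⟨d, hd0, hd⟩ := aux_common_denom (O_F := O_F) (Finset.univ.image f)
  refine ⟨d, hd0, ?_⟩
  have : algebraMap O_F K d = d • (1 : K) := (Algebra.algebraMap_eq_smul_one d)
  rw [this, ← hfg, Finset.smul_sum]
  refine Submodule.sum_mem M fun i _ => ?_
  obtain ⟨a, ha⟩ := hd (f i) (Finset.mem_image_of_mem f (Finset.mem_univ i))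
  have heq : d • (f i • (g i : K)) = a • (g i : K) := by
    rw [← smul_assoc, Algebra.smul_def d (f i), ← ha, algebraMap_smul]
  rw [heq]
  exact M.smul_mem a (g i).2

/-- boundedness of the image of a finitely generated `O_F`-span under an `F`-functional. -/
lemma aux_bound (ψ : K →ₗ[F] F) (s : Finset K) :
    ∃ d : O_F, d ≠ 0 ∧ ∀ x ∈ Submodule.span O_F (s : Set K),
      ∃ a : O_F, algebraMap O_F F a = algebraMap O_F F d * ψ x := by
  classical
  obtain ⟨d, hd0, hd⟩ := aux_common_denom (O_F := O_F) (s.image ψ)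
  refine ⟨d, hd0, fun x hx => ?_⟩
  induction hx using Submodule.span_induction with
  | mem y hy =>
      exact hd (ψ y) (Finset.mem_image_of_mem ψ hy)
  | zero => exact ⟨0, by simp⟩
  | add y z _ _ hy hz =>
      obtain ⟨a, ha⟩ := hy; obtain ⟨b, hb⟩ := hz
      exact ⟨a + b, by rw [map_add, map_add, mul_add, ha, hb]⟩
  | smul r y _ hy =>
      obtain ⟨a, ha⟩ := hy
      refine ⟨r * a, ?_⟩
      have : ψ (r • y) = r • ψ y := by
        rw [← algebraMap_smul F r y, map_smul, algebraMap_smul]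
      rw [this, map_mul, ha, Algebra.smul_def]; ring

lemma aux_gen (hquad : Module.finrank F K = 2) (M : Submodule O_F K) (hFG : M.FG)
    (hfull : Submodule.span F (M : Set K) = ⊤) :
    ∃ (c : F) (z : K), c ≠ 0 ∧ z ∉ Submodule.span F {(1:K)} ∧
      M = Submodule.span O_F {algebraMap F K c, z} ∧
      ∀ f : F, algebraMap F K f ∈ M ↔ f ∈ Submodule.span O_F {c} := by
  classical
  have hnt : Nontrivial K := by
    rcases subsingleton_or_nontrivial K with h | h
    · rw [Module.finrank_zero_of_subsingleton] at hquad; omega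
    · exact h
  have hfd : FiniteDimensional F K := Module.finite_of_finrank_pos (by omega)
  have hinj : Function.Injective (algebraMap F K) := (algebraMap F K).injective
  obtain ⟨s, hs⟩ := hFG
  -- the quotient functional
  set L : Submodule F K := Submodule.span F {(1:K)} with hL
  have hL1 : Module.finrank F L = 1 := finrank_span_singleton one_ne_zero
  have hW : Module.finrank F (K ⧸ L) = 1 := by
    have := L.finrank_quotient_add_finrank
    omega
  let e2 : (K ⧸ L) ≃ₗ[F] F :=
    (Module.basisUnique (Fin 1) hW).repr ≪≫ₗ Finsupp.LinearEquiv.finsuppUnique F F (Fin 1)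
  set ψ : K →ₗ[F] F := e2.toLinearMap.comp L.mkQ with hψ
  have hker : ∀ x : K, ψ x = 0 ↔ x ∈ L := by
    intro x
    rw [hψ, LinearMap.comp_apply]
    constructor
    · intro h
      have h2 : L.mkQ x = 0 := by
        apply e2.injective; rw [map_zero]; exact h
      rwa [Submodule.mkQ_apply, Submodule.Quotient.mk_eq_zero] at h2
    · intro h
      rw [show L.mkQ x = 0 from (Submodule.Quotient.mk_eq_zero L).mpr h, map_zero]
  -- left inverse of algebra map
  obtain ⟨φ, hφ⟩ := ((Algebra.linearMap F K).exists_leftInverse_of_injective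
    (by rw [LinearMap.ker_eq_bot]; exact hinj))
  have hφ' : ∀ f : F, φ (algebraMap F K f) = f := fun f => by
    simpa using LinearMap.congr_fun hφ f
  -- the two fractional ideals
  set SF : Submodule O_F F :=
    Submodule.comap ((Algebra.linearMap F K).restrictScalars O_F) M with hSF
  have hSFmem : ∀ f : F, f ∈ SF ↔ algebraMap F K f ∈ M := fun f => Iff.rfl
  set T : Submodule O_F F := Submodule.map (ψ.restrictScalars O_F) M with hT
  -- bounds
  obtain ⟨d₁, hd₁0, hd₁⟩ := aux_bound (O_F := O_F) ψ s
  obtain ⟨d₂, hd₂0, hd₂⟩ := aux_bound (O_F := O_F) φ s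
  have hd₁' : (algebraMap O_F F d₁) ≠ 0 := by
    simpa using (map_ne_zero_iff _ (IsFractionRing.injective O_F F)).mpr hd₁0
  have hd₂' : (algebraMap O_F F d₂) ≠ 0 := by
    simpa using (map_ne_zero_iff _ (IsFractionRing.injective O_F F)).mpr hd₂0
  obtain ⟨t₀, ht₀⟩ := aux_frac_principal T (algebraMap O_F F d₁) hd₁'
    (by rintro t ⟨x, hx, rfl⟩
        rw [← hs] at hx
        exact hd₁ x hx)
  obtain ⟨c, hc⟩ := aux_frac_principal SF (algebraMap O_F F d₂) hd₂'
    (by intro f hf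
        rw [hSFmem, ← hs] at hf
        obtain ⟨a, ha⟩ := hd₂ (algebraMap F K f) hf
        exact ⟨a, by rwa [hφ' f] at ha⟩)
  set ψ' : K →ₗ[O_F] F := ψ.restrictScalars O_F with hψ'
  -- c ≠ 0
  obtain ⟨dm, hdm0, hdm⟩ := aux_exists_scalar_mem M hfull
  have hcne : c ≠ 0 := by
    intro h0
    have hmem : algebraMap O_F F dm ∈ SF := by
      rw [hSFmem, ← IsScalarTower.algebraMap_apply]; exact hdm
    rw [hc, h0, Submodule.span_zero_singleton] at hmem
    exact absurd ((Submodule.mem_bot _).mp hmem)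
      ((map_ne_zero_iff _ (IsFractionRing.injective O_F F)).mpr hdm0)
  -- t₀ ≠ 0
  have ht₀ne : t₀ ≠ 0 := by
    intro h0
    rw [h0, Submodule.span_zero_singleton] at ht₀
    have hML : (M : Set K) ⊆ (L : Set K) := by
      intro x hx
      have hxT : ψ' x ∈ T := ⟨x, hx, rfl⟩
      rw [ht₀] at hxT
      exact (hker x).mp ((Submodule.mem_bot _).mp hxT)
    have hle : (⊤ : Submodule F K) ≤ L := by
      rw [← hfull]; exact Submodule.span_le.mpr hML
    have : Module.finrank F K ≤ 1 := by
      calc Module.finrank F K = Module.finrank F (⊤ : Submodule F K) := (finrank_top F K).symm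
      _ ≤ Module.finrank F L := Submodule.finrank_mono hle
      _ = 1 := hL1
    omega
  have ht₀T : t₀ ∈ T := ht₀ ▸ Submodule.mem_span_singleton_self t₀
  obtain ⟨z, hzM, hz⟩ := ht₀T
  have hz' : ψ' z = t₀ := hz
  have hzL : z ∉ Submodule.span F {(1:K)} := by
    intro hzmem
    apply ht₀ne
    rw [← hz']
    exact (hker z).mpr hzmem
  have hM : M = Submodule.span O_F {algebraMap F K c, z} := by
    apply le_antisymm
    · intro y hy
      have hψy : ψ' y ∈ T := ⟨y, hy, rfl⟩
      rw [ht₀] at hψy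
      obtain ⟨a, ha⟩ := Submodule.mem_span_singleton.mp hψy
      have h0 : ψ' (y - a • z) = 0 := by
        rw [map_sub, map_smul, hz', ← ha, sub_self]
      have hyz : y - a • z ∈ L := (hker _).mp h0
      obtain ⟨f, hf⟩ := Submodule.mem_span_singleton.mp hyz
      have hfK : algebraMap F K f = y - a • z := by
        rw [← hf, Algebra.algebraMap_eq_smul_one]
      have hfM : algebraMap F K f ∈ M := by
        rw [hfK]; exact M.sub_mem hy (M.smul_mem a hzM)
      have : f ∈ Submodule.span O_F {c} := by rw [← hc]; exact hfM
      obtain ⟨bb, hbb⟩ := Submodule.mem_span_singleton.mp this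
      refine Submodule.mem_span_pair.mpr ⟨bb, a, ?_⟩
      have hsc : bb • algebraMap F K c = algebraMap F K (bb • c) :=
        (map_smul ((Algebra.linearMap F K).restrictScalars O_F) bb c).symm
      rw [hsc, hbb, hfK]; abel
    · rw [Submodule.span_le, Set.insert_subset_iff, Set.singleton_subset_iff]
      constructor
      · have : c ∈ SF := by rw [hc]; exact Submodule.mem_span_singleton_self c
        exact this
      · exact hzM
  exact ⟨c, z, hcne, hzL, hM, fun f => by rw [← hc]; exact (hSFmem f).symm⟩

lemma aux_isUnit_of_map (x : K) (N M : Submodule O_F K)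
    (h : Submodule.map (LinearMap.mulLeft O_F x) N = M)
    (hfull : Submodule.span F (M : Set K) = ⊤) : IsUnit x := by
  have hr : (⊤ : Submodule F K) ≤ LinearMap.range (LinearMap.mulLeft F x) := by
    rw [← hfull]
    apply Submodule.span_le.2
    intro y hy
    rw [← h] at hy
    obtain ⟨n, _, rfl⟩ := hy
    exact ⟨n, rfl⟩
  obtain ⟨y, hy⟩ := hr (Submodule.mem_top (x := (1:K)))
  exact IsUnit.of_mul_eq_one (a := x) y hy


lemma aux_full_map (x : K) (hx : IsUnit x) (M : Submodule O_F K)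
    (hfull : Submodule.span F (M : Set K) = ⊤) :
    Submodule.span F ((Submodule.map (LinearMap.mulLeft O_F x) M : Submodule O_F K) : Set K) = ⊤ := by
  have hco : ((Submodule.map (LinearMap.mulLeft O_F x) M : Submodule O_F K) : Set K)
      = (LinearMap.mulLeft F x) '' (M : Set K) := rfl
  rw [hco, Submodule.span_image, hfull, Submodule.map_top, LinearMap.range_eq_top]
  intro y
  refine ⟨(↑hx.unit⁻¹ : K) * y, ?_⟩
  rw [LinearMap.mulLeft_apply, ← mul_assoc, IsUnit.mul_val_inv hx, one_mul]


lemma aux_multiplier_map (x : K) (hx : IsUnit x) (M : Submodule O_F K) :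
    multiplierOrder K (Submodule.map (LinearMap.mulLeft O_F x) M) = multiplierOrder K M := by
  ext a
  rw [mem_multiplierOrder_iff, mem_multiplierOrder_iff]
  constructor
  · intro ha m hm
    have : a • (x * m) ∈ Submodule.map (LinearMap.mulLeft O_F x) M :=
      ha _ ⟨m, hm, rfl⟩
    obtain ⟨m', hm', hmeq⟩ := this
    rw [LinearMap.mulLeft_apply] at hmeq
    have : x * m' = x * (a * m) := by
      rw [hmeq, smul_eq_mul]; ring
    have := hx.mul_left_cancel this
    rw [smul_eq_mul, ← this]
    exact hm'
  · rintro ha y ⟨m, hm, rfl⟩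
    refine ⟨a * m, ha m hm, ?_⟩
    rw [LinearMap.mulLeft_apply, LinearMap.mulLeft_apply, smul_eq_mul]
    ring

lemma aux_main (hquad : Module.finrank F K = 2) (M : Submodule O_F K) (hFG : M.FG)
    (hfull : Submodule.span F (M : Set K) = ⊤) :
    ∃ x : K, IsUnit x ∧
      Submodule.map (LinearMap.mulLeft O_F x)
        (Subalgebra.toSubmodule (multiplierOrder K M)) = M := by
  classical
  have hnt : Nontrivial K := by
    rcases subsingleton_or_nontrivial K with h | h
    · rw [Module.finrank_zero_of_subsingleton] at hquad; omega
    · exact h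
  have hinj : Function.Injective (algebraMap F K) := (algebraMap F K).injective
  have hinjOF : Function.Injective (algebraMap O_F F) := IsFractionRing.injective O_F F
  obtain ⟨c, z, hcne, hzL, hM, hSFiff⟩ := aux_gen hquad M hFG hfull
  have hx₀ : IsUnit (algebraMap F K c) := (hcne.isUnit).map (algebraMap F K)
  set u₀ : Kˣ := hx₀.unit with hu₀
  have hu₀v : (↑u₀ : K) = algebraMap F K c := rfl
  set z₂ : K := (↑u₀⁻¹ : K) * z with hz₂
  have hmapspan : ∀ (x a b : K), Submodule.map (LinearMap.mulLeft O_F x)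
      (Submodule.span O_F {a, b}) = Submodule.span O_F {x * a, x * b} := by
    intro x a b
    rw [Submodule.map_span, Set.image_insert_eq, Set.image_singleton]
    rfl
  have hJ : Submodule.map (LinearMap.mulLeft O_F (↑u₀⁻¹ : K)) M
      = Submodule.span O_F {(1:K), z₂} := by
    rw [hM, hmapspan]
    congr 2
    rw [← hu₀v, Units.inv_mul]
  set J : Submodule O_F K := Submodule.span O_F {(1:K), z₂} with hJdef
  have hJfull : Submodule.span F (J : Set K) = ⊤ := by
    rw [← hJ]; exact aux_full_map _ u₀⁻¹.isUnit M hfull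
  have hpair : Submodule.span F {(1:K), z₂} = ⊤ := by
    rw [← Submodule.span_span_of_tower (R := O_F) (S := F), ← hJdef, hJfull]
  have h1J : (1:K) ∈ J := Submodule.subset_span (Set.mem_insert _ _)
  have hz₂J : z₂ ∈ J := Submodule.subset_span (Set.mem_insert_iff.mpr (Or.inr rfl))
  have hz₂L : z₂ ∉ Submodule.span F {(1:K)} := by
    intro hmem
    apply hzL
    have hzz : z = c • z₂ := by
      rw [Algebra.smul_def, ← hu₀v, hz₂, ← mul_assoc, Units.mul_inv, one_mul]
    rw [hzz]
    exact Submodule.smul_mem _ c hmem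
  -- uniqueness of F-coordinates
  have huniq : ∀ α β : F, α • (1:K) + β • z₂ = 0 → α = 0 ∧ β = 0 := by
    intro α β h
    by_cases hβ : β = 0
    · subst hβ
      rw [zero_smul, add_zero] at h
      have : algebraMap F K α = 0 := by
        rw [Algebra.algebraMap_eq_smul_one, h]
      exact ⟨hinj (this.trans (map_zero _).symm), rfl⟩
    · exfalso
      apply hz₂L
      rw [Submodule.mem_span_singleton]
      refine ⟨-α/β, ?_⟩
      have h2 : β • z₂ = -(α • (1:K)) := by
        rw [add_comm] at h; exact eq_neg_of_add_eq_zero_left h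
      have h3 : z₂ = β⁻¹ • (β • z₂) := by rw [smul_smul, inv_mul_cancel₀ hβ, one_smul]
      rw [h3, h2, smul_neg, smul_smul]
      rw [show -α/β = -(β⁻¹ * α) by rw [neg_div, div_eq_inv_mul], neg_smul]
  -- extraction of integral coordinates
  have hext : ∀ (α β : F), α • (1:K) + β • z₂ ∈ J →
      (∃ a : O_F, algebraMap O_F F a = α) ∧ (∃ b : O_F, algebraMap O_F F b = β) := by
    intro α β hmem
    obtain ⟨a, b, hab⟩ := Submodule.mem_span_pair.mp hmem
    have h0 : (algebraMap O_F F a - α) • (1:K) + (algebraMap O_F F b - β) • z₂ = 0 := by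
      rw [sub_smul, sub_smul, algebraMap_smul, algebraMap_smul]
      rw [show a • (1:K) - α • (1:K) + (b • z₂ - β • z₂)
        = (a • (1:K) + b • z₂) - (α • (1:K) + β • z₂) by abel, hab, sub_self]
    obtain ⟨hα, hβ⟩ := huniq _ _ h0
    exact ⟨⟨a, sub_eq_zero.mp hα⟩, ⟨b, sub_eq_zero.mp hβ⟩⟩
  -- z₂ squared
  obtain ⟨c', d', hsq⟩ : ∃ c' d' : F, c' • (1:K) + d' • z₂ = z₂ * z₂ :=
    Submodule.mem_span_pair.mp (hpair ▸ Submodule.mem_top)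
  -- the ideal B
  set ρ : Submodule O_F F := LinearMap.range (Algebra.linearMap O_F F) with hρ
  have hρmem : ∀ f : F, f ∈ ρ ↔ ∃ a : O_F, algebraMap O_F F a = f :=
    fun f => ⟨fun ⟨a, ha⟩ => ⟨a, ha⟩, fun ⟨a, ha⟩ => ⟨a, ha⟩⟩
  set B : Submodule O_F F := ρ ⊓ (Submodule.comap (LinearMap.mulLeft O_F c') ρ)
      ⊓ (Submodule.comap (LinearMap.mulLeft O_F d') ρ) with hB
  have hBmem : ∀ β : F, β ∈ B ↔ β ∈ ρ ∧ c' * β ∈ ρ ∧ d' * β ∈ ρ := by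
    intro β
    rw [hB]
    simp only [Submodule.mem_inf, Submodule.mem_comap, LinearMap.mulLeft_apply]
    tauto
  obtain ⟨q, hq⟩ : ∃ q : F, B = Submodule.span O_F {q} := by
    apply aux_frac_principal B 1 one_ne_zero
    intro β hβ
    obtain ⟨a, ha⟩ := (hρmem β).mp ((hBmem β).mp hβ).1
    exact ⟨a, by rw [ha, one_mul]⟩
  obtain ⟨dcd, hdcd0, hdcd⟩ := aux_common_denom (O_F := O_F) ({c', d'} : Finset F)
  have hdcdB : algebraMap O_F F dcd ∈ B := by
    rw [hBmem]
    refine ⟨⟨dcd, rfl⟩, ?_, ?_⟩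
    · obtain ⟨a, ha⟩ := hdcd c' (by simp)
      exact (hρmem _).mpr ⟨a, by rw [ha]; ring⟩
    · obtain ⟨a, ha⟩ := hdcd d' (by simp)
      exact (hρmem _).mpr ⟨a, by rw [ha]; ring⟩
  have hqne : q ≠ 0 := by
    intro h0
    rw [h0, Submodule.span_zero_singleton] at hq
    rw [hq, Submodule.mem_bot] at hdcdB
    exact absurd hdcdB ((map_ne_zero_iff _ hinjOF).mpr hdcd0)
  have hqB : q ∈ B := hq ▸ Submodule.mem_span_singleton_self q
  obtain ⟨hqρ, hqc', hqd'⟩ := (hBmem q).mp hqB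
  obtain ⟨q₀, hq₀⟩ := (hρmem q).mp hqρ
  obtain ⟨e₁, he₁⟩ := (hρmem _).mp hqc'
  obtain ⟨e₂, he₂⟩ := (hρmem _).mp hqd'
  have hq₀ne : q₀ ≠ 0 := fun h => hqne (by rw [← hq₀, h, map_zero])
  set w : K := algebraMap F K q * z₂ with hw
  have hw1 : w = q₀ • z₂ := by
    rw [hw, ← Algebra.smul_def, ← hq₀, algebraMap_smul]
  have hwz₂ : w * z₂ = e₁ • (1:K) + e₂ • z₂ := by
    rw [hw, mul_assoc, ← hsq, ← Algebra.smul_def, smul_add, smul_smul, smul_smul,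
      mul_comm q c', mul_comm q d', ← he₁, ← he₂, algebraMap_smul, algebraMap_smul]
  -- the multiplier order of J
  set Rsub : Submodule O_F K := Subalgebra.toSubmodule (multiplierOrder K J) with hRsub
  have hR : Rsub = Submodule.span O_F {(1:K), w} := by
    apply le_antisymm
    · intro a ha
      rw [hRsub, Subalgebra.mem_toSubmodule, mem_multiplierOrder_iff] at ha
      have ha1 : a ∈ J := by
        have := ha 1 h1J; rwa [smul_eq_mul, mul_one] at this
      have haz : a * z₂ ∈ J := by
        have := ha z₂ hz₂J; rwa [smul_eq_mul] at this
      obtain ⟨α₀, β₀, hab⟩ := Submodule.mem_span_pair.mp ha1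
      have hcomp : a * z₂ = (c' * algebraMap O_F F β₀) • (1:K)
          + (algebraMap O_F F α₀ + d' * algebraMap O_F F β₀) • z₂ := by
        rw [← hab, add_mul, smul_mul_assoc, one_mul, smul_mul_assoc, ← hsq, smul_add]
        rw [← smul_assoc, ← smul_assoc, Algebra.smul_def β₀ c', Algebra.smul_def β₀ d']
        rw [mul_comm (algebraMap O_F F β₀) c', mul_comm (algebraMap O_F F β₀) d']
        rw [add_smul, algebraMap_smul]
        abel
      obtain ⟨h1', h2'⟩ := hext _ _ (hcomp ▸ haz)
      have hβB : algebraMap O_F F β₀ ∈ B := by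
        rw [hBmem]
        obtain ⟨v, hv⟩ := h2'
        refine ⟨⟨β₀, rfl⟩, (hρmem _).mpr h1', ?_⟩
        exact (hρmem _).mpr ⟨v - α₀, by rw [map_sub, hv]; ring⟩
      rw [hq] at hβB
      obtain ⟨r, hr⟩ := Submodule.mem_span_singleton.mp hβB
      refine Submodule.mem_span_pair.mpr ⟨α₀, r, ?_⟩
      have hrw : r • w = β₀ • z₂ := by
        rw [hw, ← Algebra.smul_def, ← smul_assoc, hr, algebraMap_smul]
      rw [hrw, hab]
    · rw [Submodule.span_le, Set.insert_subset_iff, Set.singleton_subset_iff]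
      constructor
      · rw [SetLike.mem_coe, hRsub, Subalgebra.mem_toSubmodule]
        exact (multiplierOrder K J).one_mem
      · rw [SetLike.mem_coe, hRsub, Subalgebra.mem_toSubmodule, mem_multiplierOrder_iff]
        intro x hx
        obtain ⟨a, b, hab⟩ := Submodule.mem_span_pair.mp hx
        rw [smul_eq_mul, ← hab, mul_add, mul_smul_comm, mul_smul_comm, mul_one, hwz₂]
        refine Submodule.add_mem _ ?_ ?_
        · rw [hw1]; exact Submodule.smul_mem _ a (Submodule.smul_mem _ q₀ hz₂J)
        · exact Submodule.smul_mem _ b (Submodule.add_mem _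
            (Submodule.smul_mem _ e₁ h1J) (Submodule.smul_mem _ e₂ hz₂J))
  -- find the generator x with x • Rsub = J
  have hfin : ∃ x : K, IsUnit x ∧ Submodule.map (LinearMap.mulLeft O_F x) Rsub = J := by
    by_cases hq₀u : IsUnit q₀
    · refine ⟨1, isUnit_one, ?_⟩
      rw [LinearMap.mulLeft_one, Submodule.map_id, hR, hJdef]
      apply le_antisymm
      · rw [Submodule.span_le, Set.insert_subset_iff, Set.singleton_subset_iff]
        exact ⟨h1J, by rw [SetLike.mem_coe, hw1]; exact Submodule.smul_mem _ q₀ hz₂J⟩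
      · rw [Submodule.span_le, Set.insert_subset_iff, Set.singleton_subset_iff]
        refine ⟨Submodule.subset_span (Set.mem_insert _ _), ?_⟩
        rw [SetLike.mem_coe]
        have hz₂w : z₂ = (↑hq₀u.unit⁻¹ : O_F) • w := by
          rw [hw1, smul_smul, IsUnit.val_inv_mul hq₀u, one_smul]
        rw [hz₂w]
        exact Submodule.smul_mem _ _
          (Submodule.subset_span (Set.mem_insert_iff.mpr (Or.inr rfl)))
    · obtain ⟨π, hπ⟩ := IsDiscreteValuationRing.exists_irreducible O_F
      have hmax : IsLocalRing.maximalIdeal O_F = Ideal.span {π} :=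
        (IsDiscreteValuationRing.irreducible_iff_uniformizer π).mp hπ
      have hπF : algebraMap O_F F π ≠ 0 := (map_ne_zero_iff _ hinjOF).mpr hπ.ne_zero
      obtain ⟨t, ht⟩ := Ideal.mem_span_singleton'.mp
        (by rw [← hmax]; exact (IsLocalRing.mem_maximalIdeal q₀).mpr (mem_nonunits_iff.mpr hq₀u) : q₀ ∈ Ideal.span {π})
      by_cases he₁u : IsUnit e₁
      · -- x = z₂
        have hmapz : Submodule.map (LinearMap.mulLeft O_F z₂) Rsub = J := by
          rw [hR, hmapspan, mul_one, hJdef]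
          have hz₂w : z₂ * w = e₁ • (1:K) + e₂ • z₂ := by rw [mul_comm]; exact hwz₂
          apply le_antisymm
          · rw [Submodule.span_le, Set.insert_subset_iff, Set.singleton_subset_iff]
            refine ⟨hz₂J, ?_⟩
            rw [SetLike.mem_coe, hz₂w]
            exact Submodule.add_mem _ (Submodule.smul_mem _ e₁ h1J)
              (Submodule.smul_mem _ e₂ hz₂J)
          · rw [Submodule.span_le, Set.insert_subset_iff, Set.singleton_subset_iff]
            constructor
            · rw [SetLike.mem_coe]
              have hkey : (e₁ : O_F) • (1:K) ∈ Submodule.span O_F {z₂, z₂ * w} := by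
                refine Submodule.mem_span_pair.mpr ⟨-e₂, 1, ?_⟩
                rw [one_smul, hz₂w, neg_smul]
                abel
              have hsm := Submodule.smul_mem _ (↑he₁u.unit⁻¹ : O_F) hkey
              rwa [smul_smul, IsUnit.val_inv_mul he₁u, one_smul] at hsm
            · rw [SetLike.mem_coe]
              exact Submodule.subset_span (Set.mem_insert _ _)
        exact ⟨z₂, aux_isUnit_of_map z₂ Rsub J hmapz hJfull, hmapz⟩
      · -- e₂ must be a unit
        have he₂u : IsUnit e₂ := by
          by_contra he₂u
          obtain ⟨s₁, hs₁⟩ := Ideal.mem_span_singleton'.mp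
            (by rw [← hmax]; exact (IsLocalRing.mem_maximalIdeal e₁).mpr (mem_nonunits_iff.mpr he₁u)
              : e₁ ∈ Ideal.span {π})
          obtain ⟨s₂, hs₂⟩ := Ideal.mem_span_singleton'.mp
            (by rw [← hmax]; exact (IsLocalRing.mem_maximalIdeal e₂).mpr (mem_nonunits_iff.mpr he₂u)
              : e₂ ∈ Ideal.span {π})
          have htB : algebraMap O_F F t ∈ B := by
            rw [hBmem]
            refine ⟨⟨t, rfl⟩, ?_, ?_⟩
            · refine (hρmem _).mpr ⟨s₁, ?_⟩
              apply mul_right_cancel₀ hπF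
              calc algebraMap O_F F s₁ * algebraMap O_F F π
                  = algebraMap O_F F (s₁ * π) := (map_mul _ _ _).symm
                _ = algebraMap O_F F e₁ := by rw [hs₁]
                _ = c' * q := he₁
                _ = c' * algebraMap O_F F (t * π) := by rw [← hq₀, ht]
                _ = c' * algebraMap O_F F t * algebraMap O_F F π := by
                    rw [map_mul]; ring
            · refine (hρmem _).mpr ⟨s₂, ?_⟩
              apply mul_right_cancel₀ hπF
              calc algebraMap O_F F s₂ * algebraMap O_F F π
                  = algebraMap O_F F (s₂ * π) := (map_mul _ _ _).symm
                _ = algebraMap O_F F e₂ := by rw [hs₂]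
                _ = d' * q := he₂
                _ = d' * algebraMap O_F F (t * π) := by rw [← hq₀, ht]
                _ = d' * algebraMap O_F F t * algebraMap O_F F π := by
                    rw [map_mul]; ring
          rw [hq] at htB
          obtain ⟨bb, hbb⟩ := Submodule.mem_span_singleton.mp htB
          have ht' : t = bb * q₀ := by
            apply hinjOF
            rw [← hbb, map_mul, hq₀, Algebra.smul_def]
          have htne : t ≠ 0 := fun h => hq₀ne (by rw [← ht, h, zero_mul])
          have hzero : t * (1 - bb * π) = 0 := by
            have : t * (bb * π) = t := by
              rw [show t * (bb * π) = bb * (t * π) by ring, ht, ← ht']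
            rw [mul_sub, mul_one, this, sub_self]
          have h1bp : 1 - bb * π = 0 := by
            rcases mul_eq_zero.mp hzero with h | h
            · exact absurd h htne
            · exact h
          exact hπ.not_isUnit (IsUnit.of_mul_eq_one (a := π) bb
            (by rw [mul_comm]; rw [sub_eq_zero] at h1bp; exact h1bp.symm))
        -- ε = e₁ - (q₀ + e₂) is a unit
        have hεu : IsUnit (e₁ - (q₀ + e₂)) := by
          by_contra h
          have h1 : e₁ - (q₀ + e₂) ∈ IsLocalRing.maximalIdeal O_F :=
            (IsLocalRing.mem_maximalIdeal _).mpr (mem_nonunits_iff.mpr h)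
          have h2 : e₁ ∈ IsLocalRing.maximalIdeal O_F :=
            (IsLocalRing.mem_maximalIdeal _).mpr (mem_nonunits_iff.mpr he₁u)
          have h3 : q₀ ∈ IsLocalRing.maximalIdeal O_F :=
            (IsLocalRing.mem_maximalIdeal _).mpr (mem_nonunits_iff.mpr hq₀u)
          have h4 : e₂ ∈ IsLocalRing.maximalIdeal O_F := by
            have he : e₂ = e₁ - (e₁ - (q₀ + e₂)) - q₀ := by ring
            rw [he]
            exact Submodule.sub_mem _ (Submodule.sub_mem _ h2 h1) h3
          exact mem_nonunits_iff.mp ((IsLocalRing.mem_maximalIdeal _).mp h4) he₂u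
        have hmap1 : Submodule.map (LinearMap.mulLeft O_F (1 + z₂)) Rsub = J := by
          rw [hR, hmapspan, mul_one, hJdef]
          have hv₂ : (1 + z₂) * w = e₁ • (1:K) + (q₀ + e₂) • z₂ := by
            rw [add_mul, one_mul, mul_comm z₂ w, hwz₂, hw1, add_smul]
            abel
          apply le_antisymm
          · rw [Submodule.span_le, Set.insert_subset_iff, Set.singleton_subset_iff]
            constructor
            · exact Submodule.add_mem _ h1J hz₂J
            · rw [SetLike.mem_coe, hv₂]
              exact Submodule.add_mem _ (Submodule.smul_mem _ e₁ h1J)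
                (Submodule.smul_mem _ (q₀ + e₂) hz₂J)
          · rw [Submodule.span_le, Set.insert_subset_iff, Set.singleton_subset_iff]
            have hkey : ((e₁ - (q₀ + e₂)) : O_F) • (1:K)
                ∈ Submodule.span O_F {1 + z₂, (1 + z₂) * w} := by
              refine Submodule.mem_span_pair.mpr ⟨-(q₀ + e₂), 1, ?_⟩
              rw [one_smul, hv₂, neg_smul, smul_add, sub_smul]
              abel
            have h1mem : (1:K) ∈ Submodule.span O_F {1 + z₂, (1 + z₂) * w} := by
              have hsm := Submodule.smul_mem _ (↑hεu.unit⁻¹ : O_F) hkey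
              rwa [smul_smul, IsUnit.val_inv_mul hεu, one_smul] at hsm
            constructor
            · exact h1mem
            · rw [SetLike.mem_coe]
              have hsub := Submodule.sub_mem _
                (Submodule.subset_span (Set.mem_insert (1 + z₂) {(1 + z₂) * w})) h1mem
              simpa using hsub
        exact ⟨1 + z₂, aux_isUnit_of_map _ Rsub J hmap1 hJfull, hmap1⟩
  obtain ⟨x, hxu, hxmap⟩ := hfin
  have hmult : Subalgebra.toSubmodule (multiplierOrder K M) = Rsub := by
    rw [hRsub]
    congr 1
    rw [← hJ]
    exact (aux_multiplier_map _ u₀⁻¹.isUnit M).symm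
  refine ⟨(↑u₀ : K) * x, (Units.isUnit u₀).mul hxu, ?_⟩
  rw [hmult, LinearMap.mulLeft_mul, Submodule.map_comp, hxmap, ← hJ,
    ← Submodule.map_comp, ← LinearMap.mulLeft_mul, Units.mul_inv,
    LinearMap.mulLeft_one, Submodule.map_id]

lemma aux_indep (ω : K) (hω : ω ∉ Submodule.span F {(1:K)}) :
    ∀ α β : F, α • (1:K) + β • ω = 0 → α = 0 ∧ β = 0 := by
  have hnt : Nontrivial K := by
    refine ⟨1, 0, fun h => hω ?_⟩
    have : ∀ y : K, y = 0 := by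
      intro y
      calc y = y * 1 := (mul_one y).symm
      _ = y * 0 := by rw [← h]
      _ = 0 := mul_zero y
    rw [this ω]; exact Submodule.zero_mem _
  have hinj : Function.Injective (algebraMap F K) := (algebraMap F K).injective
  intro α β h
  by_cases hβ : β = 0
  · subst hβ
    rw [zero_smul, add_zero] at h
    have : algebraMap F K α = 0 := by
      rw [Algebra.algebraMap_eq_smul_one, h]
    exact ⟨hinj (this.trans (map_zero _).symm), rfl⟩
  · exfalso
    apply hω
    rw [Submodule.mem_span_singleton]
    refine ⟨-α/β, ?_⟩
    have h2 : β • ω = -(α • (1:K)) := by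
      rw [add_comm] at h; exact eq_neg_of_add_eq_zero_left h
    have h3 : ω = β⁻¹ • (β • ω) := by rw [smul_smul, inv_mul_cancel₀ hβ, one_smul]
    rw [h3, h2, smul_neg, smul_smul]
    rw [show -α/β = -(β⁻¹ * α) by rw [neg_div, div_eq_inv_mul], neg_smul]


lemma aux_inj (hquad : Module.finrank F K = 2) (k₁ k₂ : ℕ)
    (R : Submodule O_F K) (hRfg : R.FG) (hRfull : Submodule.span F (R : Set K) = ⊤)
    (h₁ : R = conductorOrderSubmodule O_F K k₁)
    (h₂ : R = conductorOrderSubmodule O_F K k₂) :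
    k₁ = k₂ := by
  have hinj : Function.Injective (algebraMap F K) := by
    have hnt : Nontrivial K := by
      rcases subsingleton_or_nontrivial K with h | h
      · rw [Module.finrank_zero_of_subsingleton] at hquad; omega
      · exact h
    exact (algebraMap F K).injective
  have hinjOF : Function.Injective (algebraMap O_F F) := IsFractionRing.injective O_F F
  set OK : Submodule O_F K := Subalgebra.toSubmodule (integralClosure O_F K) with hOK
  have hR1 : R ≤ OK := by
    rw [h₁, conductorOrderSubmodule]
    apply sup_le
    · rw [Submodule.one_eq_span, Submodule.span_le, Set.singleton_subset_iff]
      exact Subalgebra.one_mem _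
    · intro y hy
      refine Submodule.smul_induction_on hy ?_ ?_
      · intro r _ n hn; exact OK.smul_mem r hn
      · intro a b ha hb; exact OK.add_mem ha hb
  have hOKfull : Submodule.span F (OK : Set K) = ⊤ :=
    top_unique (hRfull ▸ Submodule.span_mono (fun x hx => hR1 hx))
  obtain ⟨π, hπ⟩ := IsDiscreteValuationRing.exists_irreducible O_F
  have hmax : IsLocalRing.maximalIdeal O_F = Ideal.span {π} :=
    (IsDiscreteValuationRing.irreducible_iff_uniformizer π).mp hπ
  have hπm : π ∈ IsLocalRing.maximalIdeal O_F := by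
    rw [hmax]; exact Ideal.mem_span_singleton_self π
  have hπK : IsUnit (algebraMap F K (algebraMap O_F F π)) := by
    have h0 : algebraMap O_F F π ≠ 0 := (map_ne_zero_iff _ hinjOF).mpr hπ.ne_zero
    exact h0.isUnit.map (algebraMap F K)
  set uπ : Kˣ := hπK.unit with huπ
  have huπv : (↑uπ : K) = algebraMap F K (algebraMap O_F F π) := rfl
  have hpowv : ∀ k : ℕ, (↑(uπ ^ k) : K) * 1 = (π ^ k : O_F) • (1:K) := by
    intro k
    rw [mul_one, Units.val_pow_eq_pow_val, huπv, ← map_pow, ← map_pow,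
      ← IsScalarTower.algebraMap_apply, Algebra.algebraMap_eq_smul_one]
  have hsubmap : ∀ k : ℕ, OK ≤ Submodule.map
      (LinearMap.mulLeft O_F ((↑(uπ⁻¹ ^ k) : K))) (conductorOrderSubmodule O_F K k) := by
    intro k y hy
    refine ⟨(↑(uπ ^ k) : K) * y, ?_, ?_⟩
    · have h1 : (↑(uπ ^ k) : K) * y = (π ^ k : O_F) • y := by
        rw [Units.val_pow_eq_pow_val, huπv, ← map_pow, ← map_pow,
          ← IsScalarTower.algebraMap_apply, ← Algebra.smul_def]
      rw [h1]
      apply Submodule.mem_sup_right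
      exact Submodule.smul_mem_smul (Ideal.pow_mem_pow hπm k) hy
    · rw [LinearMap.mulLeft_apply, ← mul_assoc, ← Units.val_mul]
      simp
  have hOKfg : OK.FG := by
    have hCfg : (conductorOrderSubmodule O_F K k₁).FG := h₁ ▸ hRfg
    exact aux_fg_of_le (hsubmap k₁)
      (Submodule.FG.map (LinearMap.mulLeft O_F ((↑(uπ⁻¹ ^ k₁) : K))) hCfg)
  obtain ⟨c, ω, hcne, hωL, hOKeq, hOKiff⟩ := aux_gen hquad OK hOKfg hOKfull
  have hint : ∀ f : F, f ∈ Submodule.span O_F {c} ↔ ∃ a : O_F, algebraMap O_F F a = f := by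
    intro f
    rw [← hOKiff f]
    constructor
    · intro hf
      have hi : IsIntegral O_F (algebraMap F K f) := hf
      rw [isIntegral_algebraMap_iff hinj] at hi
      exact IsIntegrallyClosed.isIntegral_iff.mp hi
    · rintro ⟨a, rfl⟩
      show algebraMap F K (algebraMap O_F F a) ∈ integralClosure O_F K
      rw [← IsScalarTower.algebraMap_apply]
      exact isIntegral_algebraMap
  have h1span : (1:F) ∈ Submodule.span O_F {c} := (hint 1).mpr ⟨1, map_one _⟩
  obtain ⟨binv, hbinv⟩ := Submodule.mem_span_singleton.mp h1span
  obtain ⟨a₀, ha₀⟩ := (hint c).mp (Submodule.mem_span_singleton_self c)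
  have hOKeq' : OK = Submodule.span O_F {(1:K), ω} := by
    rw [hOKeq]
    apply le_antisymm
    · rw [Submodule.span_le, Set.insert_subset_iff, Set.singleton_subset_iff]
      constructor
      · have hca : algebraMap F K c = a₀ • (1:K) := by
          rw [← ha₀, ← IsScalarTower.algebraMap_apply, Algebra.algebraMap_eq_smul_one]
        rw [SetLike.mem_coe, hca]
        exact Submodule.smul_mem _ _ (Submodule.subset_span (Set.mem_insert _ _))
      · exact Submodule.subset_span (Set.mem_insert_iff.mpr (Or.inr rfl))
    · rw [Submodule.span_le, Set.insert_subset_iff, Set.singleton_subset_iff]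
      constructor
      · have h1 : (1:K) = binv • algebraMap F K c := by
          have hc1 := congrArg (algebraMap F K) hbinv
          rw [map_one] at hc1
          rw [← hc1, Algebra.smul_def binv c, map_mul, ← IsScalarTower.algebraMap_apply,
            ← Algebra.smul_def]
        rw [SetLike.mem_coe, h1]
        exact Submodule.smul_mem _ _ (Submodule.subset_span (Set.mem_insert _ _))
      · exact Submodule.subset_span (Set.mem_insert_iff.mpr (Or.inr rfl))
  have hωOK : ω ∈ OK := by
    rw [hOKeq']
    exact Submodule.subset_span (Set.mem_insert_iff.mpr (Or.inr rfl))
  have hcond : ∀ k : ℕ, conductorOrderSubmodule O_F K k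
      = Submodule.span O_F {(1:K), (π^k : O_F) • ω} := by
    intro k
    apply le_antisymm
    · apply sup_le
      · rw [Submodule.one_eq_span, Submodule.span_le, Set.singleton_subset_iff]
        exact Submodule.subset_span (Set.mem_insert _ _)
      · intro y hy
        refine Submodule.smul_induction_on hy ?_ (fun a b ha hb => Submodule.add_mem _ ha hb)
        intro r hr v hv
        rw [hmax, Ideal.span_singleton_pow] at hr
        obtain ⟨t, ht⟩ := Ideal.mem_span_singleton'.mp hr
        rw [← hOK, hOKeq'] at hv
        obtain ⟨a, b, hab⟩ := Submodule.mem_span_pair.mp hv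
        rw [← ht, ← hab]
        refine Submodule.mem_span_pair.mpr ⟨t * π^k * a, t * b, ?_⟩
        module
    · rw [Submodule.span_le, Set.insert_subset_iff, Set.singleton_subset_iff]
      constructor
      · apply Submodule.mem_sup_left
        rw [Submodule.one_eq_span]
        exact Submodule.subset_span rfl
      · apply Submodule.mem_sup_right
        refine Submodule.smul_mem_smul ?_ hωOK
        rw [hmax, Ideal.span_singleton_pow]
        exact Ideal.mem_span_singleton_self _
  have hk : ∀ i j : ℕ, Submodule.span O_F {(1:K), (π^i:O_F) • ω}
      ≤ Submodule.span O_F {(1:K), (π^j:O_F) • ω} → j ≤ i := by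
    intro i j hle
    have hmem : (π^i : O_F) • ω ∈ Submodule.span O_F {(1:K), (π^j:O_F) • ω} :=
      hle (Submodule.subset_span (Set.mem_insert_iff.mpr (Or.inr rfl)))
    obtain ⟨a, b, hab⟩ := Submodule.mem_span_pair.mp hmem
    have h0 : (algebraMap O_F F a) • (1:K)
        + (algebraMap O_F F (b * π^j) - algebraMap O_F F (π^i)) • ω = 0 := by
      rw [sub_smul, algebraMap_smul, algebraMap_smul, algebraMap_smul]
      rw [show (b * π^j : O_F) • ω = b • ((π^j:O_F) • ω) from (smul_smul b _ ω).symm]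
      rw [show a • (1:K) + (b • ((π^j:O_F) • ω) - (π^i:O_F) • ω)
        = (a • (1:K) + b • ((π^j:O_F) • ω)) - (π^i:O_F) • ω by abel, hab, sub_self]
    obtain ⟨_, hβ⟩ := aux_indep (F := F) ω hωL _ _ h0
    have hpow : b * π ^ j = π ^ i := hinjOF (by rw [sub_eq_zero] at hβ; exact hβ)
    by_contra hji
    push_neg at hji
    have hji' : j = i + (j - i) := by omega
    have hcc : π ^ i * (b * π ^ (j - i)) = π ^ i * 1 := by
      rw [mul_one, show π ^ i * (b * π ^ (j - i)) = b * (π ^ i * π ^ (j-i)) by ring,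
        ← pow_add, ← hji', hpow]
    have h1b : b * π ^ (j - i) = 1 := mul_left_cancel₀ (pow_ne_zero i hπ.ne_zero) hcc
    apply hπ.not_isUnit
    refine IsUnit.of_mul_eq_one (a := π) (b * π ^ (j - i - 1)) ?_
    calc π * (b * π ^ (j - i - 1)) = b * (π * π ^ (j - i - 1)) := by ring
      _ = b * π ^ (j - i) := by rw [← pow_succ']; congr 2; omega
      _ = 1 := h1b
  have heq : Submodule.span O_F {(1:K), (π^k₁:O_F) • ω}
      = Submodule.span O_F {(1:K), (π^k₂:O_F) • ω} := by
    rw [← hcond, ← hcond, ← h₁, ← h₂]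
  exact le_antisymm (hk k₂ k₁ heq.ge) (hk k₁ k₂ heq.le)

end Aux

/-- the fibers `𝒱(k)` of the conductor-exponent map on vertices of the
Bruhat–Tits tree are exactly the `K^×`-orbits: two full lattices have the same conductor
exponent if and only if they are `K^×`-homothetic (note `F^× ⊆ K^×`, so at the level of
vertices this says `K^×` acts transitively on each `𝒱(k)` and distinct `k` give
distinct orbits). -/
theorem vertexFibers_are_Kstar_orbits
    (O_F F K V : Type*) [CommRing O_F] [IsDomain O_F] [IsDiscreteValuationRing O_F]
    [Field F] [Algebra O_F F] [IsFractionRing O_F F]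
    [CommRing K] [IsSemisimpleRing K] [Algebra F K] [Algebra O_F K]
    [IsScalarTower O_F F K] (hquad : Module.finrank F K = 2)
    [AddCommGroup V] [Module K V] [Module F V] [IsScalarTower F K V]
    [Module O_F V] [IsScalarTower O_F K V] [IsScalarTower O_F F V]
    (b : Basis (Fin 1) K V) :
    ∀ (Λ₁ Λ₂ : Submodule O_F V) (k₁ k₂ : ℕ),
      Λ₁.FG → Submodule.span F (Λ₁ : Set V) = ⊤ →
      Λ₂.FG → Submodule.span F (Λ₂ : Set V) = ⊤ →
      Subalgebra.toSubmodule (multiplierOrder K Λ₁) = conductorOrderSubmodule O_F K k₁ →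
      Subalgebra.toSubmodule (multiplierOrder K Λ₂) = conductorOrderSubmodule O_F K k₂ →
      (k₁ = k₂ ↔ ∃ a : Kˣ, (Λ₂ : Set V) = (fun x => (a : K) • x) '' (Λ₁ : Set V)) := by
  intro Λ₁ Λ₂ k₁ k₂ hfg₁ hfull₁ hfg₂ hfull₂ hmo₁ hmo₂
  classical
  set e : V ≃ₗ[K] K := b.repr ≪≫ₗ Finsupp.LinearEquiv.finsuppUnique K K (Fin 1) with he
  set eO : V ≃ₗ[O_F] K := e.restrictScalars O_F with heO
  set eF : V ≃ₗ[F] K := e.restrictScalars F with heF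
  set I₁ : Submodule O_F K := Λ₁.map (eO : V →ₗ[O_F] K) with hI₁
  set I₂ : Submodule O_F K := Λ₂.map (eO : V →ₗ[O_F] K) with hI₂
  have hfgI₁ : I₁.FG := Submodule.FG.map _ hfg₁
  have hfgI₂ : I₂.FG := Submodule.FG.map _ hfg₂
  have hfullI : ∀ (Λ : Submodule O_F V), Submodule.span F (Λ : Set V) = ⊤ →
      Submodule.span F ((Λ.map (eO : V →ₗ[O_F] K)) : Set K) = ⊤ := by
    intro Λ h
    have hset : ((Λ.map (eO : V →ₗ[O_F] K)) : Set K) = (eF : V →ₗ[F] K) '' (Λ : Set V) := rfl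
    rw [hset, Submodule.span_image, h, Submodule.map_top, LinearMap.range_eq_top]
    exact eF.surjective
  have hfullI₁ : Submodule.span F (I₁ : Set K) = ⊤ := hfullI Λ₁ hfull₁
  have hfullI₂ : Submodule.span F (I₂ : Set K) = ⊤ := hfullI Λ₂ hfull₂
  have hmulI : ∀ (Λ : Submodule O_F V),
      multiplierOrder K (Λ.map (eO : V →ₗ[O_F] K)) = multiplierOrder K Λ := by
    intro Λ
    ext a
    constructor
    · intro ha x hx
      have h1 : a • e x ∈ Λ.map (eO : V →ₗ[O_F] K) := ha (e x) ⟨x, hx, rfl⟩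
      obtain ⟨y, hy, hyeq⟩ := h1
      have hxy : y = a • x := by
        apply e.injective
        have h1 : e y = a • e x := hyeq
        rw [h1, map_smul]
      rwa [← hxy]
    · rintro ha y ⟨x, hx, rfl⟩
      exact ⟨a • x, ha x hx, map_smul e a x⟩
  have hmoI₁ : Subalgebra.toSubmodule (multiplierOrder K I₁) = conductorOrderSubmodule O_F K k₁ := by
    rw [hI₁, hmulI]; exact hmo₁
  have hmoI₂ : Subalgebra.toSubmodule (multiplierOrder K I₂) = conductorOrderSubmodule O_F K k₂ := by
    rw [hI₂, hmulI]; exact hmo₂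
  obtain ⟨x₁, hx₁, hmap₁⟩ := aux_main (F := F) hquad I₁ hfgI₁ hfullI₁
  obtain ⟨x₂, hx₂, hmap₂⟩ := aux_main (F := F) hquad I₂ hfgI₂ hfullI₂
  have hmemI : ∀ (Λ : Submodule O_F V) (v : V),
      e v ∈ Λ.map (eO : V →ₗ[O_F] K) ↔ v ∈ Λ := by
    intro Λ v
    constructor
    · rintro ⟨x, hx, hxe⟩
      rwa [show v = x from (e.injective hxe).symm]
    · intro hv; exact ⟨v, hv, rfl⟩
  constructor
  · -- same conductor exponent → homothetic
    intro hk
    subst hk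
    set a : Kˣ := hx₂.unit * hx₁.unit⁻¹ with ha
    have hax : (↑a : K) * x₁ = x₂ := by
      rw [ha, Units.val_mul, mul_assoc, IsUnit.val_inv_mul hx₁, mul_one, IsUnit.unit_spec]
    have hKlevel : Submodule.map (LinearMap.mulLeft O_F (↑a : K)) I₁ = I₂ := by
      conv_lhs => rw [← hmap₁]
      rw [← Submodule.map_comp, ← LinearMap.mulLeft_mul, hax, hmoI₁, ← hmoI₂]
      exact hmap₂
    refine ⟨a, ?_⟩
    ext v
    constructor
    · intro hv
      have h1 : e v ∈ I₂ := (hmemI Λ₂ v).mpr hv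
      rw [← hKlevel] at h1
      obtain ⟨y, hy, hyeq⟩ := h1
      obtain ⟨u, hu, hue⟩ := hy
      refine ⟨u, hu, ?_⟩
      have h1 : e u = y := hue
      have h2 : e ((↑a:K) • u) = (↑a:K) * y := by rw [map_smul, h1, smul_eq_mul]
      have h3 : (↑a:K) * y = e v := hyeq
      exact e.injective (h2.trans h3)
    · rintro ⟨u, hu, rfl⟩
      show (↑a:K) • u ∈ Λ₂
      rw [← hmemI Λ₂, ← hI₂, ← hKlevel]
      refine ⟨eO u, ⟨u, hu, rfl⟩, ?_⟩
      show (↑a : K) * (eO u) = e ((↑a:K) • u)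
      rw [map_smul, smul_eq_mul]
      rfl
  · -- homothetic → same conductor exponent
    rintro ⟨a, hset⟩
    have hKlevel : Submodule.map (LinearMap.mulLeft O_F (↑a : K)) I₁ = I₂ := by
      apply SetLike.coe_injective
      show (LinearMap.mulLeft O_F (↑a : K)) '' (I₁ : Set K) = (I₂ : Set K)
      rw [show (I₁ : Set K) = ⇑e '' (Λ₁ : Set V) from rfl,
        show (I₂ : Set K) = ⇑e '' (Λ₂ : Set V) from rfl, hset, ← Set.image_comp,
        ← Set.image_comp]
      apply Set.image_congr
      intro x _
      show (↑a : K) * e x = e ((↑a : K) • x)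
      rw [map_smul, smul_eq_mul]
    have hmoeq : multiplierOrder K I₁ = multiplierOrder K I₂ := by
      rw [← hKlevel]
      exact (aux_multiplier_map _ a.isUnit I₁).symm
    have hCeq : conductorOrderSubmodule O_F K k₁ = conductorOrderSubmodule O_F K k₂ := by
      rw [← hmoI₁, ← hmoI₂, hmoeq]
    have hRrev : Submodule.map (LinearMap.mulLeft O_F (↑hx₁.unit⁻¹ : K)) I₁
        = Subalgebra.toSubmodule (multiplierOrder K I₁) := by
      conv_lhs => rw [← hmap₁]
      rw [← Submodule.map_comp, ← LinearMap.mulLeft_mul, IsUnit.val_inv_mul hx₁,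
        LinearMap.mulLeft_one, Submodule.map_id]
    have hRfg : (conductorOrderSubmodule O_F K k₁).FG := by
      rw [← hmoI₁, ← hRrev]
      exact Submodule.FG.map _ hfgI₁
    have hRfull : Submodule.span F ((conductorOrderSubmodule O_F K k₁ : Submodule O_F K) : Set K) = ⊤ := by
      rw [← hmoI₁, ← hRrev]
      exact aux_full_map (F := F) _ hx₁.unit⁻¹.isUnit I₁ hfullI₁
    exact aux_inj (F := F) hquad k₁ k₂ (conductorOrderSubmodule O_F K k₁) hRfg hRfull rfl hCeq
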